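/- Let b₀, b₁, b₂ : ℝ → ℝ be differentiable with b₀(t) > 0, b₂(t) > 0, and let c₀, c₁, c₂ be real constants with c₀ > 0, c₂ > 0. Suppose there exist a differentiable function α : ℝ → (0, ∞) and a function D : ℝ → ℝ such that α(t)² b₀(t) = D(t) c₀, b₁(t) + 2 α'(t)/α(t) = D(t) c₁, and α(t)⁻² b₂(t) = D(t) c₂ for all t. Then necessarily D(t)² c₀ c₂ = b₀(t) b₂(t), the integrability condition b₁ + (1/2)(b₂'/b₂ − b₀'/b₀) = c₁ √(b₀ b₂/(c₀ c₂)) holds for all t, and the transformation is uniquely determined: α(t) = (b₂(t) c₀ / (b₀(t) c₂))^{1/4}. -/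

import Mathlib

/-- If a positive differentiable `α` and a function `D` transform the
coefficients `(b₀, b₁, b₂)` (with `b₀, b₂ > 0`) into `D·(c₀, c₁, c₂)` (with `c₀, c₂ > 0`),
i.e. `α² b₀ = D c₀`, `b₁ + 2α'/α = D c₁`, `α⁻² b₂ = D c₂`, then necessarily
`D² c₀ c₂ = b₀ b₂`, the integrability condition
`b₁ + (1/2)(b₂'/b₂ − b₀'/b₀) = c₁ √(b₀ b₂/(c₀ c₂))` holds, and the transformation is
uniquely determined: `α = (b₂ c₀/(b₀ c₂))^{1/4}`. -/
theorem diag_transform_necessary_conditions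
    (b₀ b₁ b₂ : ℝ → ℝ)
    (hb₀ : Differentiable ℝ b₀) (hb₁ : Differentiable ℝ b₁) (hb₂ : Differentiable ℝ b₂)
    (hb₀pos : ∀ t, 0 < b₀ t) (hb₂pos : ∀ t, 0 < b₂ t)
    (c₀ c₁ c₂ : ℝ) (hc₀ : 0 < c₀) (hc₂ : 0 < c₂)
    (α D : ℝ → ℝ) (hαpos : ∀ t, 0 < α t) (hα : Differentiable ℝ α)
    (h0 : ∀ t, (α t) ^ 2 * b₀ t = D t * c₀)
    (h1 : ∀ t, b₁ t + 2 * deriv α t / α t = D t * c₁)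
    (h2 : ∀ t, (α t)⁻¹ ^ 2 * b₂ t = D t * c₂) :
    (∀ t, (D t) ^ 2 * (c₀ * c₂) = b₀ t * b₂ t) ∧
      (∀ t, b₁ t + (1 / 2) * (deriv b₂ t / b₂ t - deriv b₀ t / b₀ t) =
        c₁ * Real.sqrt (b₀ t * b₂ t / (c₀ * c₂))) ∧
      (∀ t, α t = (b₂ t * c₀ / (b₀ t * c₂)) ^ ((1 : ℝ) / 4)) := by
  have hαne : ∀ t, α t ≠ 0 := fun t => (hαpos t).ne'
  have h2' : ∀ t, b₂ t = D t * c₂ * α t ^ 2 := by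
    intro t
    have := h2 t
    rw [inv_pow, inv_mul_eq_div, div_eq_iff (pow_ne_zero 2 (hαne t))] at this
    linarith [this]
  have hsq : ∀ t, (D t) ^ 2 * (c₀ * c₂) = b₀ t * b₂ t := by
    intro t
    have e1 := h0 t
    have e2 := h2' t
    linear_combination (-(D t * c₂)) * e1 - b₀ t * e2
  have hDpos : ∀ t, 0 < D t := by
    intro t
    have e1 := h0 t
    nlinarith [hb₀pos t, hαpos t, sq_nonneg (α t), mul_pos (pow_pos (hαpos t) 2) (hb₀pos t)]
  have hDsqrt : ∀ t, D t = Real.sqrt (b₀ t * b₂ t / (c₀ * c₂)) := by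
    intro t
    rw [show b₀ t * b₂ t / (c₀ * c₂) = (D t) ^ 2 by
      field_simp; linarith [hsq t]]
    rw [Real.sqrt_sq (hDpos t).le]
  have hα4 : ∀ t, α t ^ 4 * (b₀ t * c₂) = b₂ t * c₀ := by
    intro t
    have e1 := h0 t
    have e2 := h2' t
    linear_combination α t ^ 2 * c₂ * e1 - c₀ * e2
  have hfun : (fun t => α t ^ 4 * (b₀ t * c₂)) = (fun t => b₂ t * c₀) := funext hα4
  have hE : ∀ t, (4 * α t ^ 3 * deriv α t) * (b₀ t * c₂) + α t ^ 4 * (deriv b₀ t * c₂)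
      = deriv b₂ t * c₀ := by
    intro t
    have hL : deriv (fun t => α t ^ 4 * (b₀ t * c₂)) t
        = (4 * α t ^ 3 * deriv α t) * (b₀ t * c₂) + α t ^ 4 * (deriv b₀ t * c₂) := by
      rw [deriv_fun_mul ((hα t).fun_pow 4) ((hb₀ t).mul_const c₂)]
      rw [deriv_fun_pow (hα t) 4, deriv_mul_const (hb₀ t)]
      ring
    have hR : deriv (fun t => b₂ t * c₀) t = deriv b₂ t * c₀ := deriv_mul_const (hb₂ t) c₀
    rw [← hL, ← hR, hfun]
  refine ⟨hsq, ?_, ?_⟩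
  · intro t
    rw [← hDsqrt t]
    have e1 := h1 t
    have hE' := hE t
    have hK := hα4 t
    have hb0 := (hb₀pos t).ne'
    have hb2 := (hb₂pos t).ne'
    have hane := hαne t
    -- goal: b₁ + (1/2)(b₂'/b₂ - b₀'/b₀) = c₁ * D; from e1: b₁ + 2α'/α = D c₁
    have key : (1:ℝ)/2 * (deriv b₂ t / b₂ t - deriv b₀ t / b₀ t) = 2 * deriv α t / α t := by
      have hc0 : c₀ ≠ 0 := hc₀.ne'
      field_simp
      apply mul_right_cancel₀ hc0
      linear_combination (-(α t * b₀ t)) * hE' +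
        (deriv b₀ t * α t + 4 * deriv α t * b₀ t) * hK
    rw [key]; linarith [e1]
  · intro t
    have hK := hα4 t
    have hratio : b₂ t * c₀ / (b₀ t * c₂) = α t ^ 4 := by
      field_simp [ne_of_gt (mul_pos (hb₀pos t) hc₂), (hb₀pos t).ne'] at *
      linarith [hK]
    rw [hratio]
    rw [show (α t ^ 4 : ℝ) = (α t) ^ (4:ℝ) by
      rw [← Real.rpow_natCast (α t) 4]; norm_num]
    rw [← Real.rpow_mul (hαpos t).le]
    norm_num
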